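/- arXiv:1911.07298 — 3 statements merged into one kernel-verified Lean document; each statement's English description precedes it below -/
import Mathlib

section
/- Let G be a finite directed graph, F ⊆ V with |F| ≤ f, and suppose G−F has two distinct source components S₁ and S₂ in its strongly connected component decomposition. Then G does not satisfy condition SC with parameter F: for the partition A = S₁, B = V − S₁, neither A (f+1)-propagates to B−F avoiding F, nor B (f+1)-propagates to A−F avoiding F. -/
open Set

variable {V : Type*}

/-- A (directed) path: nonempty list of distinct vertices with consecutive edges. -/
def DiPath (E : V → V → Prop) (p : List V) : Prop :=
  p ≠ [] ∧ p.Nodup ∧ p.Chain' E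

/-- A path excludes `F` if none of its internal vertices lies in `F`. -/
def Excludes (F : Set V) (p : List V) : Prop :=
  ∀ x ∈ p.tail.dropLast, x ∉ F

/-- A path from (a vertex of) `A` to `v`. -/
def PathFromTo (E : V → V → Prop) (A : Set V) (v : V) (p : List V) : Prop :=
  DiPath E p ∧ (∃ a ∈ A, p.head? = some a) ∧ p.getLast? = some v

/-- There exist `n` pairwise internally-disjoint `A`-`v` paths excluding `F`
(sharing only the terminal `v`). -/
def DisjPaths (E : V → V → Prop) (F A : Set V) (v : V) (n : ℕ) : Prop :=
  ∃ P : Fin n → List V,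
    (∀ i, PathFromTo E A v (P i) ∧ Excludes F (P i)) ∧
    (∀ i j, i ≠ j → ∀ x, x ∈ P i → x ∈ P j → x = v)

/-- `A` (f+1)-propagates to every vertex of `B` avoiding `F`. -/
def Propagates (E : V → V → Prop) (f : ℕ) (F A B : Set V) : Prop :=
  ∀ v ∈ B, DisjPaths E F A v (f + 1)

/-- Condition SC with parameter `F`. -/
def CondSC (E : V → V → Prop) (f : ℕ) (F : Set V) : Prop :=
  ∀ A B : Set V, A ∪ B = Set.univ → A ∩ B = ∅ →
    (A \ F).Nonempty → (B \ F).Nonempty →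
    Propagates E f F A (B \ F) ∨ Propagates E f F B (A \ F)

/-- Reachability within the vertex set `W`. -/
def ReachIn (E : V → V → Prop) (W : Set V) : V → V → Prop :=
  Relation.ReflTransGen (fun a b => a ∈ W ∧ b ∈ W ∧ E a b)

/-- `S` is a (maximal) strongly connected component of the induced subgraph on `W`. -/
def IsSCCIn (E : V → V → Prop) (W S : Set V) : Prop :=
  S.Nonempty ∧ S ⊆ W ∧ (∀ u ∈ S, ∀ v ∈ S, ReachIn E W u v) ∧
  ∀ T, S ⊆ T → T ⊆ W → (∀ u ∈ T, ∀ v ∈ T, ReachIn E W u v) → T = S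

/-- `S` is a source component of `G − F`: an SCC of the induced subgraph on `V − F`
receiving no edge from a vertex of `V − F` outside `S`. -/
def IsSourceComponent (E : V → V → Prop) (F S : Set V) : Prop :=
  IsSCCIn E (Set.univ \ F) S ∧ ∀ u, u ∉ F → u ∉ S → ∀ s ∈ S, ¬ E u s

/-- In-neighborhood of `T` contained in `B`. -/
def inNbr (E : V → V → Prop) (B T : Set V) : Set V :=
  {u ∈ B | ∃ v ∈ T, E u v}

/-- `N(F→S)`: vertices of `F` with an edge into `S`. -/
def NFS (E : V → V → Prop) (F S : Set V) : Set V :=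
  {w ∈ F | ∃ s ∈ S, E w s}

/-- Edge relation of the subgraph induced on `U`. -/
def inducedE (E : V → V → Prop) (U : Set V) : V → V → Prop :=
  fun a b => a ∈ U ∧ b ∈ U ∧ E a b

/-- Condition NC with parameter `F`. -/
def CondNC (E : V → V → Prop) (f : ℕ) (F : Set V) : Prop :=
  ∀ L C R : Set V, L ∪ C ∪ R = Set.univ →
    L ∩ C = ∅ → L ∩ R = ∅ → C ∩ R = ∅ →
    (L \ F).Nonempty → (R \ F).Nonempty →
    f < (inNbr E (R ∪ C) (L \ F)).ncard ∨ f < (inNbr E (L ∪ C) (R \ F)).ncard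

/-- Distinct SCCs in the same vertex set are disjoint. -/
lemma scc_disjoint {E : V → V → Prop} {W S T : Set V}
    (hS : IsSCCIn E W S) (hT : IsSCCIn E W T) (hne : S ≠ T) : S ∩ T = ∅ := by
  obtain ⟨hSne, hSW, hSr, hSm⟩ := hS
  obtain ⟨hTne, hTW, hTr, hTm⟩ := hT
  by_contra h
  obtain ⟨x, hxS, hxT⟩ := Set.nonempty_iff_ne_empty.mpr h
  have hreach : ∀ u ∈ S ∪ T, ∀ v ∈ S ∪ T, ReachIn E W u v := by
    intro u hu v hv
    rcases hu with hu | hu <;> rcases hv with hv | hv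
    · exact hSr u hu v hv
    · exact (hSr u hu x hxS).trans (hTr x hxT v hv)
    · exact (hTr u hu x hxT).trans (hSr x hxS v hv)
    · exact hTr u hu v hv
  have h1 := hSm (S ∪ T) subset_union_left (union_subset hSW hTW) hreach
  have h2 := hTm (S ∪ T) subset_union_right (union_subset hSW hTW) hreach
  exact hne (h1 ▸ h2)

/-- Any `F`-excluding path starting outside a source component `S` and ending in `S`
has its head in `F`. -/
lemma head_mem_F {E : V → V → Prop} {F S : Set V}
    (hsrc : ∀ u, u ∉ F → u ∉ S → ∀ s ∈ S, ¬ E u s) :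
    ∀ (p : List V), p.Chain' E → Excludes F p →
      (∀ a, p.head? = some a → a ∉ S) →
      (∀ b, p.getLast? = some b → b ∈ S) →
      ∀ a, p.head? = some a → a ∈ F := by
  intro p
  induction p with
  | nil => intro _ _ _ _ a ha; simp at ha
  | cons a rest ih =>
    intro hch hex hh hl x hx
    simp only [List.head?_cons, Option.some.injEq] at hx
    subst hx
    have haS : a ∉ S := hh a rfl
    cases rest with
    | nil =>
      exact absurd (hl a (by simp)) haS
    | cons b rest' =>
      have hEab : E a b := (List.isChain_cons_cons.mp hch).1
      by_cases hbS : b ∈ S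
      · by_contra haF
        exact hsrc a haF haS b hbS hEab
      · -- recurse on `b :: rest'`
        have hch' : (b :: rest').Chain' E := (List.isChain_cons_cons.mp hch).2
        have hex' : Excludes F (b :: rest') := by
          intro y hy
          apply hex
          cases rest' with
          | nil => simp at hy
          | cons c rest'' =>
            simp only [List.tail_cons] at hy ⊢
            rw [List.dropLast_cons₂]
            exact List.mem_cons_of_mem _ hy
        have hh' : ∀ z, (b :: rest').head? = some z → z ∉ S := by
          intro z hz
          simp only [List.head?_cons, Option.some.injEq] at hz
          subst hz; exact hbS
        have hl' : ∀ z, (b :: rest').getLast? = some z → z ∈ S := by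
          intro z hz
          apply hl
          rw [List.getLast?_cons_cons]; exact hz
        have hbF : b ∈ F := ih hch' hex' hh' hl' b rfl
        -- b is an internal vertex of a :: b :: rest', unless rest' = []
        cases rest' with
        | nil => exact absurd (hl b (by simp)) hbS
        | cons c rest'' =>
          exact absurd hbF (hex b (by
            simp only [List.tail_cons]
            rw [List.dropLast_cons₂]
            exact List.mem_cons_self))

/-- If `G − F` has two distinct source components, then for the partition
`(S₁, V − S₁)` neither side propagates, so `G` fails condition SC with parameter `F`. -/
theorem two_source_components_fail_SC [Fintype V] (E : V → V → Prop) (f : ℕ)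
    (F S₁ S₂ : Set V) (hF : F.ncard ≤ f)
    (h1 : IsSourceComponent E F S₁) (h2 : IsSourceComponent E F S₂) (hne : S₁ ≠ S₂) :
    ¬ Propagates E f F S₁ ((Set.univ \ S₁) \ F) ∧
    ¬ Propagates E f F (Set.univ \ S₁) (S₁ \ F) ∧
    ¬ CondSC E f F := by
  obtain ⟨hSCC1, hsrc1⟩ := h1
  obtain ⟨hSCC2, hsrc2⟩ := h2
  have hdisj : S₁ ∩ S₂ = ∅ := scc_disjoint hSCC1 hSCC2 hne
  obtain ⟨hne1, hsub1, -, -⟩ := hSCC1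
  obtain ⟨hne2, hsub2, -, -⟩ := hSCC2
  obtain ⟨v₂, hv₂⟩ := hne2
  obtain ⟨v₁, hv₁⟩ := hne1
  have hv₂F : v₂ ∉ F := fun h => (hsub2 hv₂).2 h
  have hv₁F : v₁ ∉ F := fun h => (hsub1 hv₁).2 h
  have hv₂S₁ : v₂ ∉ S₁ := fun h =>
    Set.eq_empty_iff_forall_notMem.mp hdisj v₂ ⟨h, hv₂⟩
  -- Part 1: no propagation from S₁ to (univ \ S₁) \ F
  have part1 : ¬ Propagates E f F S₁ ((Set.univ \ S₁) \ F) := by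
    intro hp
    obtain ⟨P, hPpath, -⟩ := hp v₂ ⟨⟨trivial, hv₂S₁⟩, hv₂F⟩
    obtain ⟨⟨⟨-, -, hch⟩, ⟨a, haS₁, ha⟩, hlast⟩, hex⟩ := hPpath ⟨0, Nat.succ_pos f⟩
    have haF : a ∈ F := by
      refine head_mem_F hsrc2 _ hch hex ?_ ?_ a ha
      · intro z hz
        rw [ha] at hz
        injection hz with hz; subst hz
        exact fun h => Set.eq_empty_iff_forall_notMem.mp hdisj a ⟨haS₁, h⟩
      · intro z hz
        rw [hlast] at hz
        injection hz with hz; subst hz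
        exact hv₂
    exact (hsub1 haS₁).2 haF
  -- Part 2: no propagation from univ \ S₁ to S₁ \ F
  have part2 : ¬ Propagates E f F (Set.univ \ S₁) (S₁ \ F) := by
    intro hp
    obtain ⟨P, hPpath, hPdisj⟩ := hp v₁ ⟨hv₁, hv₁F⟩
    -- head of each path lies in F
    have hhead : ∀ i : Fin (f + 1), ∃ a, (P i).head? = some a ∧ a ∈ F := by
      intro i
      obtain ⟨⟨⟨-, -, hch⟩, ⟨a, haB, ha⟩, hlast⟩, hex⟩ := hPpath i
      refine ⟨a, ha, head_mem_F hsrc1 _ hch hex ?_ ?_ a ha⟩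
      · intro z hz
        rw [ha] at hz
        injection hz with hz; subst hz
        exact haB.2
      · intro z hz
        rw [hlast] at hz
        injection hz with hz; subst hz
        exact hv₁
    choose h hh hhF using hhead
    have hinj : Function.Injective (fun i : Fin (f + 1) => (⟨h i, hhF i⟩ : F)) := by
      intro i j hij
      by_contra hne'
      simp only [Subtype.mk.injEq] at hij
      have hmem_i : h i ∈ P i := List.mem_of_mem_head? (by rw [hh i]; rfl)
      have hmem_j : h i ∈ P j := hij ▸ List.mem_of_mem_head? (by rw [hh j]; rfl)
      have := hPdisj i j hne' (h i) hmem_i hmem_j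
      exact hv₁F (this ▸ hhF i)
    have hcard : f + 1 ≤ Nat.card F := by
      have := Nat.card_le_card_of_injective _ hinj
      simpa using this
    rw [Nat.card_coe_set_eq] at hcard
    omega
  refine ⟨part1, part2, ?_⟩
  intro hsc
  rcases hsc S₁ (Set.univ \ S₁) (by simp) (by ext x; simp) ⟨v₁, hv₁, hv₁F⟩
      ⟨v₂, ⟨trivial, hv₂S₁⟩, hv₂F⟩ with h | h
  · exact part1 h
  · exact part2 h
end

section
/- Let G be a finite directed graph that does not satisfy condition NC with parameter F, witnessed by a partition (L,C,R) with L−F and R−F nonempty, the in-neighborhood of L−F in R∪C of size ≤ f, and the in-neighborhood of R−F in L∪C of size ≤ f. Then for the partition A = L, B = R∪C: no vertex of L−F has f+1 pairwise internally-disjoint paths from B excluding F, and no vertex of R−F has f+1 pairwise internally-disjoint paths from A excluding F; hence G fails condition SC with parameter F. -/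
open Set

variable {V : Type*}

lemma crossing {E : V → V → Prop} {S : Set V} :
    ∀ (p : List V), p.Chain' E →
      (∃ a ∈ S, p.head? = some a) → ∀ t, p.getLast? = some t → t ∉ S →
      ∃ u v, u ∈ S ∧ v ∉ S ∧ E u v ∧ u ∈ p ∧ v ∈ p.tail := by
  intro p
  induction p with
  | nil => rintro _ ⟨a, _, ha⟩; simp at ha
  | cons a rest ih =>
    rintro hch ⟨a', ha'S, ha'⟩ t ht htS
    simp only [List.head?_cons, Option.some.injEq] at ha'
    subst ha'
    match rest with
    | [] =>
      simp only [List.getLast?_singleton, Option.some.injEq] at ht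
      exact absurd (ht ▸ ha'S) htS
    | b :: rest' =>
      replace hch := List.isChain_cons_cons.mp hch
      by_cases hb : b ∈ S
      · obtain ⟨u, v, h1, h2, h3, h4, h5⟩ :=
          ih hch.2 ⟨b, hb, rfl⟩ t (by rw [← ht]; rfl) htS
        exact ⟨u, v, h1, h2, h3, List.mem_cons_of_mem _ h4,
          List.mem_of_mem_tail h5⟩
      · exact ⟨a, b, ha'S, hb, hch.1, List.mem_cons_self,
          List.mem_cons_self⟩

lemma mem_internal_or_last {p : List V} {v t : V} (hv : v ∈ p.tail)
    (ht : p.getLast? = some t) : v ∈ p.tail.dropLast ∨ v = t := by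
  have htail : p.tail ≠ [] := by intro h; rw [h] at hv; simp at hv
  have hpne : p ≠ [] := by intro h; rw [h] at hv; simp at hv
  have hlast : p.tail.getLast htail = t := by
    have : p.getLast? = p.tail.getLast? := by
      cases p with
      | nil => simp at hpne
      | cons a q =>
        cases q with
        | nil => simp at htail
        | cons b q' => rw [List.getLast?_cons_cons]; rfl
    rw [this, List.getLast?_eq_getLast htail] at ht
    exact Option.some_inj.mp ht
  rw [← List.dropLast_append_getLast htail] at hv
  rcases List.mem_append.mp hv with h | h
  · exact Or.inl h
  · right; simpa [hlast] using h

lemma no_disj (E : V → V → Prop) (f : ℕ) (F A S D : Set V) [Fintype V]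
    (hAS : A ⊆ S) (t : V) (htD : t ∈ D) (htS : t ∉ S)
    (hD : ∀ v, v ∉ S → v ∉ F → v ∈ D)
    (hsmall : (inNbr E S D).ncard ≤ f) : ¬ DisjPaths E F A t (f + 1) := by
  rintro ⟨P, h1, h2⟩
  have key : ∀ i, ∃ u, u ∈ inNbr E S D ∧ u ∈ P i := by
    intro i
    obtain ⟨⟨⟨_, _, hch⟩, ⟨a, haA, ha⟩, hlast⟩, hex⟩ := h1 i
    obtain ⟨u, v, huS, hvS, hEuv, huP, hvt⟩ :=
      crossing (P i) hch ⟨a, hAS haA, ha⟩ t hlast htS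
    have hvD : v ∈ D := by
      rcases mem_internal_or_last hvt hlast with h | h
      · exact hD v hvS (hex v h)
      · exact h ▸ htD
    exact ⟨u, ⟨huS, v, hvD, hEuv⟩, huP⟩
  choose g hg1 hg2 using key
  have hinj : Function.Injective g := by
    intro i j hij
    by_contra hne
    have := h2 i j hne (g i) (hg2 i) (hij ▸ hg2 j)
    exact htS (this ▸ (hg1 i).1)
  have hsub : Set.range g ⊆ inNbr E S D := by
    rintro _ ⟨i, rfl⟩; exact hg1 i
  have := Set.ncard_le_ncard hsub (Set.toFinite _)
  have hr : (Set.range g).ncard = f + 1 := by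
    classical
    rw [Set.ncard_eq_toFinset_card', Set.toFinset_range,
      Finset.card_image_of_injective _ hinj]
    simp
  omega

/-- A witness to the failure of condition NC yields a failure of condition SC:
for `A = L`, `B = R ∪ C`, no vertex of `L − F` has `f+1` disjoint paths from `B`
excluding `F`, no vertex of `R − F` has `f+1` disjoint paths from `A` excluding `F`,
hence `G` fails condition SC with parameter `F`. -/
theorem NC_failure_gives_SC_failure [Fintype V] (E : V → V → Prop) (f : ℕ)
    (F L C R : Set V) (hF : F.ncard ≤ f)
    (hpart : L ∪ C ∪ R = Set.univ)
    (hLC : L ∩ C = ∅) (hLR : L ∩ R = ∅) (hCR : C ∩ R = ∅)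
    (hL : (L \ F).Nonempty) (hR : (R \ F).Nonempty)
    (hsmall1 : (inNbr E (R ∪ C) (L \ F)).ncard ≤ f)
    (hsmall2 : (inNbr E (L ∪ C) (R \ F)).ncard ≤ f) :
    (∀ t ∈ L \ F, ¬ DisjPaths E F (R ∪ C) t (f + 1)) ∧
    (∀ t ∈ R \ F, ¬ DisjPaths E F L t (f + 1)) ∧
    ¬ CondSC E f F := by
  have huniv : ∀ x : V, x ∈ L ∨ x ∈ C ∨ x ∈ R := by
    intro x
    have : x ∈ L ∪ C ∪ R := hpart ▸ Set.mem_univ x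
    rcases this with (h | h) | h
    · exact Or.inl h
    · exact Or.inr (Or.inl h)
    · exact Or.inr (Or.inr h)
  have hdisj : ∀ {X Y : Set V}, X ∩ Y = ∅ → ∀ {x}, x ∈ X → x ∈ Y → False := by
    intro X Y h x hx hy
    have : x ∈ X ∩ Y := ⟨hx, hy⟩
    rw [h] at this
    exact this
  have part1 : ∀ t ∈ L \ F, ¬ DisjPaths E F (R ∪ C) t (f + 1) := by
    intro t ht
    refine no_disj E f F (R ∪ C) (R ∪ C) (L \ F) le_rfl t ht ?_ ?_ hsmall1
    · rintro (h | h)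
      · exact hdisj hLR ht.1 h
      · exact hdisj hLC ht.1 h
    · intro v hv hvF
      rcases huniv v with h | h | h
      · exact ⟨h, hvF⟩
      · exact absurd (Or.inr h) hv
      · exact absurd (Or.inl h) hv
  have part2 : ∀ t ∈ R \ F, ¬ DisjPaths E F L t (f + 1) := by
    intro t ht
    refine no_disj E f F L (L ∪ C) (R \ F) Set.subset_union_left t ht ?_ ?_ hsmall2
    · rintro (h | h)
      · exact hdisj hLR h ht.1
      · exact hdisj hCR h ht.1
    · intro v hv hvF
      rcases huniv v with h | h | h
      · exact absurd (Or.inl h) hv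
      · exact absurd (Or.inr h) hv
      · exact ⟨h, hvF⟩
  refine ⟨part1, part2, ?_⟩
  intro hSC
  have hAB : L ∪ (R ∪ C) = Set.univ := by
    rw [← hpart]; ext x; constructor
    · rintro (h | h | h) <;> simp [h] <;> tauto
    · rintro ((h | h) | h) <;> tauto
  have hABd : L ∩ (R ∪ C) = ∅ := by
    ext x; simp only [Set.mem_inter_iff, Set.mem_union, Set.mem_empty_iff_false,
      iff_false, not_and, not_or]
    intro hx
    exact ⟨fun h => hdisj hLR hx h, fun h => hdisj hLC hx h⟩
  have hRC : ((R ∪ C) \ F).Nonempty := by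
    obtain ⟨x, hx1, hx2⟩ := hR
    exact ⟨x, Or.inl hx1, hx2⟩
  rcases hSC L (R ∪ C) hAB hABd hL hRC with h | h
  · obtain ⟨x, hx1, hx2⟩ := hR
    exact part2 x ⟨hx1, hx2⟩ (h x ⟨Or.inl hx1, hx2⟩)
  · obtain ⟨x, hx⟩ := hL
    exact part1 x hx (h x hx)
end

section
/- Let G be a finite directed graph satisfying condition SC (condition SC with parameter F for every F ⊆ V with |F| ≤ f), where 0 < f < |V|. Then for every F with |F| ≤ f, in the unique source component S of G−F together with its in-neighbors in F, for any partition of S ∪ N(F→S) into sets Z and N with Z−F and N−F both nonempty: if Z does not (f+1)-propagate to N−F avoiding F within G[S ∪ N(F→S)], then N does (f+1)-propagate to Z−F avoiding F within G[S ∪ N(F→S)]. -/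
open Set

variable {V : Type*}

/-- Path confinement: every path in `G` ending in the source component `S`,
whose internal vertices avoid `F`, lies entirely in `S ∪ N(F→S)` and is a
path of the induced subgraph. -/
lemma confine_aux (E : V → V → Prop) (F S : Set V)
    (hsrc : ∀ u, u ∉ F → u ∉ S → ∀ s ∈ S, ¬ E u s) :
    ∀ p : List V, p.Chain' E → ∀ v ∈ S, p.getLast? = some v →
      (∀ x ∈ p.tail.dropLast, x ∉ F) →
      (∀ x ∈ p, x ∈ S ∪ NFS E F S) ∧ p.Chain' (inducedE E (S ∪ NFS E F S)) := by
  intro p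
  induction p with
  | nil => intro _ v hv h; simp at h
  | cons a rest ih =>
    intro hch v hv hlast hint
    cases rest with
    | nil =>
      simp only [List.getLast?_singleton, Option.some.injEq] at hlast
      subst hlast
      constructor
      · intro x hx; simp only [List.mem_singleton] at hx; subst hx; exact Or.inl hv
      · exact List.isChain_singleton _
    | cons b t =>
      have hEab : E a b := (List.isChain_cons_cons.mp hch).1
      have hch' : List.Chain' E (b :: t) := (List.isChain_cons_cons.mp hch).2
      have hlast' : (b :: t).getLast? = some v := by
        rw [← hlast, List.getLast?_cons_cons]
      have hint0 : ∀ x ∈ (b :: t).dropLast, x ∉ F := hint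
      have hint' : ∀ x ∈ (b :: t).tail.dropLast, x ∉ F := by
        intro x hx
        apply hint0
        cases t with
        | nil => simp at hx
        | cons c t' =>
          simp only [List.tail_cons] at hx
          rw [List.dropLast_cons₂]
          exact List.mem_cons_of_mem _ hx
      obtain ⟨hmem, hchI⟩ := ih hch' v hv hlast' hint'
      have hbS : b ∈ S := by
        cases t with
        | nil =>
          simp only [List.getLast?_singleton, Option.some.injEq] at hlast'
          subst hlast'; exact hv
        | cons c t' =>
          have hbF : b ∉ F := by
            apply hint0
            rw [List.dropLast_cons₂]
            exact List.mem_cons_self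
          rcases hmem b (List.mem_cons_self) with h | h
          · exact h
          · exact absurd h.1 hbF
      have haU : a ∈ S ∪ NFS E F S := by
        by_cases haF : a ∈ F
        · exact Or.inr ⟨haF, b, hbS, hEab⟩
        · by_cases haS : a ∈ S
          · exact Or.inl haS
          · exact absurd hEab (hsrc a haF haS b hbS)
      refine ⟨?_, ?_⟩
      · intro x hx
        rcases List.mem_cons.mp hx with rfl | hx
        · exact haU
        · exact hmem x hx
      · exact List.isChain_cons_cons.mpr ⟨⟨haU, Or.inl hbS, hEab⟩, hchI⟩

/-- Transfer disjoint path systems ending in `S` from `G` to the induced subgraph. -/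
lemma disj_transfer (E : V → V → Prop) (F S A A' : Set V)
    (hsrc : ∀ u, u ∉ F → u ∉ S → ∀ s ∈ S, ¬ E u s)
    (hA : ∀ a ∈ A, a ∈ S ∪ NFS E F S → a ∈ A')
    (v : V) (hv : v ∈ S) (n : ℕ)
    (h : DisjPaths E F A v n) :
    DisjPaths (inducedE E (S ∪ NFS E F S)) F A' v n := by
  obtain ⟨P, h1, h2⟩ := h
  refine ⟨P, fun i => ?_, h2⟩
  obtain ⟨⟨⟨hne, hnd, hch⟩, ⟨a, haA, hhead⟩, hlastv⟩, hexc⟩ := h1 i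
  obtain ⟨hmem, hchI⟩ := confine_aux E F S hsrc (P i) hch v hv hlastv hexc
  have haP : a ∈ P i := by
    cases hp : P i with
    | nil => exact absurd hp hne
    | cons x xs =>
      rw [hp, List.head?_cons, Option.some.injEq] at hhead
      subst hhead; exact hp.symm ▸ (List.mem_cons_self (a := x) (l := xs))
  exact ⟨⟨⟨hne, hnd, hchI⟩, ⟨a, hA a haA (hmem a haP), hhead⟩, hlastv⟩, hexc⟩

/-- In the induced subgraph on `S ∪ N(F→S)`: if `Z` does not (f+1)-propagate to
`N − F` avoiding `F`, then `N` does (f+1)-propagate to `Z − F` avoiding `F`. -/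
theorem dichotomy_in_source_component [Fintype V] (E : V → V → Prop) (f : ℕ)
    (hf0 : 0 < f) (hfn : f < Fintype.card V)
    (hSC : ∀ F : Set V, F.ncard ≤ f → CondSC E f F)
    (F S : Set V) (hF : F.ncard ≤ f)
    (hS : IsSourceComponent E F S)
    (hUniq : ∀ S', IsSourceComponent E F S' → S' = S)
    (Z N : Set V) (hpart : Z ∪ N = S ∪ NFS E F S) (hdisj : Z ∩ N = ∅)
    (hZ : (Z \ F).Nonempty) (hN : (N \ F).Nonempty)
    (hnp : ¬ Propagates (inducedE E (S ∪ NFS E F S)) f F Z (N \ F)) :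
    Propagates (inducedE E (S ∪ NFS E F S)) f F N (Z \ F) := by
  have hsrc := hS.2
  have hSF : ∀ s ∈ S, s ∉ F := fun s hs => (hS.1.2.1 hs).2
  have hNFSF : NFS E F S ⊆ F := fun w hw => hw.1
  have hUF : (S ∪ NFS E F S) \ F ⊆ S := by
    rintro x ⟨h | h, hxF⟩
    · exact h
    · exact absurd (hNFSF h) hxF
  have hZU : Z ⊆ S ∪ NFS E F S := fun x hx => hpart ▸ Or.inl hx
  have hNU : N ⊆ S ∪ NFS E F S := fun x hx => hpart ▸ Or.inr hx
  have hZS : Z \ F ⊆ S := fun x hx => hUF ⟨hZU hx.1, hx.2⟩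
  have hNS : N \ F ⊆ S := fun x hx => hUF ⟨hNU hx.1, hx.2⟩
  set A : Set V := Z ∪ (S ∪ NFS E F S)ᶜ with hA
  have hunion : A ∪ N = Set.univ := by
    rw [Set.eq_univ_iff_forall]
    intro x
    by_cases hxU : x ∈ S ∪ NFS E F S
    · rcases hpart ▸ hxU with h | h
      · exact Or.inl (Or.inl h)
      · exact Or.inr h
    · exact Or.inl (Or.inr hxU)
  have hdisj' : A ∩ N = ∅ := by
    rw [Set.eq_empty_iff_forall_notMem]
    rintro x ⟨h | h, hxN⟩
    · exact (Set.eq_empty_iff_forall_notMem.mp hdisj x) ⟨h, hxN⟩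
    · exact h (hNU hxN)
  have hAne : (A \ F).Nonempty := by
    obtain ⟨x, hx⟩ := hZ
    exact ⟨x, Or.inl hx.1, hx.2⟩
  rcases hSC F hF A N hunion hdisj' hAne hN with hcase | hcase
  · exfalso
    apply hnp
    intro v hv
    have hAZ : ∀ a ∈ A, a ∈ S ∪ NFS E F S → a ∈ Z := by
      rintro a (h | h) hU
      · exact h
      · exact absurd hU h
    exact disj_transfer E F S A Z hsrc hAZ v (hNS hv) (f + 1) (hcase v hv)
  · intro v hv
    exact disj_transfer E F S N N hsrc (fun a ha _ => ha) v (hZS hv) (f + 1)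
      (hcase v ⟨Or.inl hv.1, hv.2⟩)
end
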